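/- Let G : ℕ → ℝ satisfy G 0 = 0, G 1 = 1 and G (n+2) = 4·G (n+1) - G n for all n ≥ 0. Then for every positive integer n, n³/3 - (n²/√3)·(1 - 2/(1 - (2 - √3)^(2n))) = n³/3 + n²·G (2n)/(6·(G n)²). In particular this common value (the Kirchhoff index of the ladder graph L_n) is a rational number. -/

import Mathlib

private def gq : ℕ → ℚ
  | 0 => 0
  | 1 => 1
  | (n+2) => 4 * gq (n+1) - gq n

private lemma gq_pos : ∀ n : ℕ, 1 ≤ gq (n+1) ∧ gq n ≤ gq (n+1) := by
  intro n
  induction n with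
  | zero => simp [gq]
  | succ k ih =>
    obtain ⟨h1, h2⟩ := ih
    refine ⟨?_, ?_⟩
    · show 1 ≤ 4 * gq (k+1) - gq k
      nlinarith
    · show gq (k+1) ≤ 4 * gq (k+1) - gq k
      nlinarith

private lemma alg (s A B c : ℝ) (hs : s ^ 2 = 3) (hs0 : s ≠ 0) (hAB : A * B = 1)
    (hABne : A - B ≠ 0) (hB : 1 - B ^ 2 ≠ 0) :
    -(c / s) * (1 - 2 / (1 - B ^ 2)) = c * ((A ^ 2 - B ^ 2) / (2 * s)) / (6 * ((A - B) / (2 * s)) ^ 2) := by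
  have h2 : ((A - B) / (2 * s)) ^ 2 ≠ 0 := pow_ne_zero _ (div_ne_zero hABne (by simpa using hs0))
  have e1 : -(c / s) * (1 - 2 / (1 - B ^ 2)) = c * (A + B) / (s * (A - B)) := by
    field_simp
    linear_combination 2*c*B*hAB
  have e2 : c * ((A ^ 2 - B ^ 2) / (2 * s)) / (6 * ((A - B) / (2 * s)) ^ 2)
      = c * (A + B) / (s * (A - B)) := by
    field_simp
    linear_combination 2*c*(A^2-B^2)*hs
  rw [e1, e2]

theorem kirchhoff_index_fibonacci (G : ℕ → ℝ) (hG0 : G 0 = 0) (hG1 : G 1 = 1)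
    (hGrec : ∀ n : ℕ, G (n + 2) = 4 * G (n + 1) - G n) :
    ∀ n : ℕ, 0 < n →
      ((n : ℝ) ^ 3 / 3 - ((n : ℝ) ^ 2 / Real.sqrt 3) *
            (1 - 2 / (1 - (2 - Real.sqrt 3) ^ (2 * n)))
          = (n : ℝ) ^ 3 / 3 + (n : ℝ) ^ 2 * G (2 * n) / (6 * (G n) ^ 2)) ∧
      ∃ q : ℚ, (n : ℝ) ^ 3 / 3 + (n : ℝ) ^ 2 * G (2 * n) / (6 * (G n) ^ 2) = (q : ℝ) := by
  set s := Real.sqrt 3 with hsdef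
  have hs2 : s ^ 2 = 3 := Real.sq_sqrt (by norm_num)
  have hsnn : (0:ℝ) ≤ s := Real.sqrt_nonneg 3
  have hs1 : 1 < s := by nlinarith
  have hs0 : (0:ℝ) < s := by linarith
  have hslt2 : s < 2 := by nlinarith
  have hGq : ∀ n, G n = (gq n : ℝ) ∧ G (n+1) = (gq (n+1) : ℝ) := by
    intro n
    induction n with
    | zero => simp [gq, hG0, hG1]
    | succ k ih =>
      refine ⟨ih.2, ?_⟩
      rw [hGrec, ih.1, ih.2, show gq (k+2) = 4 * gq (k+1) - gq k from rfl]
      push_cast; ring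
  have hclosed : ∀ n, G n * (2 * s) = (2+s)^n - (2-s)^n ∧
      G (n+1) * (2 * s) = (2+s)^(n+1) - (2-s)^(n+1) := by
    intro n
    induction n with
    | zero => constructor <;> simp [hG0, hG1] <;> ring
    | succ k ih =>
      refine ⟨ih.2, ?_⟩
      rw [hGrec]
      linear_combination 4 * ih.2 - ih.1 + ((2-s)^k - (2+s)^k) * hs2
  intro n hn
  have hgpos : (0:ℚ) < gq n := by
    obtain ⟨m, rfl⟩ := Nat.exists_eq_succ_of_ne_zero hn.ne'
    linarith [(gq_pos m).1]
  have hGn : G n = (gq n : ℝ) := (hGq n).1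
  have hGnpos : 0 < G n := by rw [hGn]; exact_mod_cast hgpos
  refine ⟨?_, ?_⟩
  · set A := (2+s)^n with hA
    set B := (2-s)^n with hB
    have hcn := (hclosed n).1
    have hABne : A - B ≠ 0 := by
      intro h
      rw [← hA, ← hB] at hcn
      nlinarith [hcn, hGnpos, hs0]
    have hBlt : B < 1 := by
      rw [hB]
      exact pow_lt_one₀ (by linarith) (by linarith) hn.ne'
    have hBpos : 0 < B := pow_pos (by linarith) n
    have hB2 : (1:ℝ) - B ^ 2 ≠ 0 := by nlinarith
    have hAB1 : A * B = 1 := by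
      rw [hA, hB, ← mul_pow]
      have h : (2+s)*(2-s) = 1 := by nlinarith
      rw [h, one_pow]
    have hG2n : G (2*n) = (A^2 - B^2) / (2*s) := by
      have h := (hclosed (2*n)).1
      rw [hA, hB, ← pow_mul, ← pow_mul, mul_comm n 2]
      field_simp
      linarith [h]
    have hGn' : G n = (A - B) / (2*s) := by
      field_simp
      linarith [hcn]
    have hpow : (2 - s) ^ (2*n) = B ^ 2 := by rw [hB, ← pow_mul, mul_comm n 2]
    rw [hpow, hG2n, hGn']
    have h := alg s A B ((n:ℝ)^2) hs2 hs0.ne' hAB1 hABne hB2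
    linarith [h]
  · refine ⟨(n:ℚ)^3/3 + (n:ℚ)^2 * gq (2*n) / (6 * (gq n)^2), ?_⟩
    rw [hGn, (hGq (2*n)).1]
    push_cast
    ring
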